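/- The group of ℝ-algebra automorphisms of A = ℝ[X,Y]/⟨X²,Y²⟩ has exactly eight connected components (in the Euclidean topology induced from its embedding into the space of 3×3 real matrices via the action on 𝔫). -/

import Mathlib

set_option synthInstance.maxHeartbeats 1000000
set_option maxHeartbeats 1000000

/-- The Weil algebra `A = ℝ[X,Y]/⟨X², Y²⟩`. -/
noncomputable abbrev WA : Type :=
  MvPolynomial (Fin 2) ℝ ⧸
    Ideal.span {(MvPolynomial.X 0 : MvPolynomial (Fin 2) ℝ) ^ 2, (MvPolynomial.X 1) ^ 2}

noncomputable def wx : WA := Ideal.Quotient.mk _ (MvPolynomial.X 0)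
noncomputable def wy : WA := Ideal.Quotient.mk _ (MvPolynomial.X 1)

/-- The image of `Aut(A)` in the space of `3 × 3` real matrices, via the action of an
automorphism on the nilpotent ideal `𝔫` with basis `{X, Y, XY}` (rows record the
coordinates of the images of `X`, `Y`, `XY`). -/
def autMatrices : Set (Matrix (Fin 3) (Fin 3) ℝ) :=
  {M | ∃ φ : WA ≃ₐ[ℝ] WA,
    φ wx = M 0 0 • wx + M 0 1 • wy + M 0 2 • (wx * wy) ∧
    φ wy = M 1 0 • wx + M 1 1 • wy + M 1 2 • (wx * wy) ∧
    φ (wx * wy) = M 2 0 • wx + M 2 1 • wy + M 2 2 • (wx * wy)}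

lemma wx_sq : wx * wx = 0 := by
  rw [wx, ← map_mul, ← sq, Ideal.Quotient.eq_zero_iff_mem]
  exact Ideal.subset_span (by simp)

lemma wy_sq : wy * wy = 0 := by
  rw [wy, ← map_mul, ← sq, Ideal.Quotient.eq_zero_iff_mem]
  exact Ideal.subset_span (by simp)

open TrivSqZeroExt DualNumber

noncomputable def dpre : MvPolynomial (Fin 2) ℝ →ₐ[ℝ] DualNumber (DualNumber ℝ) :=
  MvPolynomial.aeval ![(inl ε : DualNumber (DualNumber ℝ)), (ε : DualNumber (DualNumber ℝ))]

lemma dpre_vanish : ∀ a ∈ Ideal.span {(MvPolynomial.X 0 : MvPolynomial (Fin 2) ℝ) ^ 2,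
    (MvPolynomial.X 1) ^ 2}, dpre a = 0 := by
  intro a ha
  have h : Ideal.span {(MvPolynomial.X 0 : MvPolynomial (Fin 2) ℝ) ^ 2, (MvPolynomial.X 1) ^ 2}
      ≤ RingHom.ker dpre.toRingHom := by
    rw [Ideal.span_le]
    rintro p (rfl | rfl) <;>
      simp [RingHom.mem_ker, dpre, sq, ← inl_mul, DualNumber.eps_mul_eps]
  exact h ha

noncomputable def dmap : WA →ₐ[ℝ] DualNumber (DualNumber ℝ) :=
  Ideal.Quotient.liftₐ _ dpre dpre_vanish

lemma dmap_wx : dmap wx = inl ε := by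
  show dpre (MvPolynomial.X 0) = _
  simp [dpre]

lemma dmap_wy : dmap wy = ε := by
  show dpre (MvPolynomial.X 1) = _
  simp [dpre]

lemma indep {a b c : ℝ} (h : a • wx + b • wy + c • (wx * wy) = 0) :
    a = 0 ∧ b = 0 ∧ c = 0 := by
  have h2 := congrArg dmap h
  simp only [map_add, map_smul, map_mul, map_zero, dmap_wx, dmap_wy] at h2
  have h1 : (inl ε : DualNumber (DualNumber ℝ)) * ε = inr ε := by
    show (inl ε : DualNumber (DualNumber ℝ)) * inr 1 = inr ε
    rw [inl_mul_inr, smul_eq_mul, mul_one]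
  rw [h1] at h2
  have hf := congrArg fst h2
  have hs := congrArg snd h2
  simp only [fst_add, snd_add, fst_smul, snd_smul, fst_inl, snd_inl, fst_inr, snd_inr,
    DualNumber.fst_eps, DualNumber.snd_eps, fst_zero, snd_zero, smul_zero, zero_add,
    add_zero] at hf hs
  -- hf : a • ε = 0 in ℝ[ε]; hs : b • 1 + c • ε = 0 in ℝ[ε]
  have hfa := congrArg snd hf
  have hsb := congrArg fst hs
  have hsc := congrArg snd hs
  simp only [fst_add, snd_add, fst_smul, snd_smul, DualNumber.fst_eps, DualNumber.snd_eps,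
    fst_one, snd_one, fst_zero, snd_zero, smul_zero, zero_add, add_zero,
    smul_eq_mul, mul_one, mul_zero] at hfa hsb hsc
  exact ⟨hfa, hsb, hsc⟩

lemma wxy_ne : wx * wy ≠ 0 := by
  intro h
  have h0 : (0:ℝ) • wx + (0:ℝ) • wy + (1:ℝ) • (wx * wy) = 0 := by
    simp only [zero_smul, one_smul, zero_add, h]
  have h3 := (indep h0).2.2
  norm_num at h3

lemma mul_expand' {A : Type} [CommRing A] [Algebra ℝ A] (x y : A)
    (hx : x * x = 0) (hy : y * y = 0) (a b c a' b' c' : ℝ) :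
    (a • x + b • y + c • (x * y)) * (a' • x + b' • y + c' • (x * y)) =
      (a * b' + b * a') • (x * y) := by
  simp only [Algebra.smul_def, map_mul, map_add]
  set p := algebraMap ℝ A a
  set q := algebraMap ℝ A b
  set r := algebraMap ℝ A c
  set p' := algebraMap ℝ A a'
  set q' := algebraMap ℝ A b'
  set r' := algebraMap ℝ A c'
  linear_combination (p*p' + (p*r'+r*p') * y + r*r' * (y*y)) * hx +
    (q*q' + (q*r'+r*q') * x) * hy

lemma mul_expand (a b c a' b' c' : ℝ) :
    (a • wx + b • wy + c • (wx * wy)) * (a' • wx + b' • wy + c' • (wx * wy)) =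
      (a * b' + b * a') • (wx * wy) :=
  mul_expand' wx wy wx_sq wy_sq a b c a' b' c'

lemma smul_xy_eq_zero {r : ℝ} (h : r • (wx * wy) = 0) : r = 0 := by
  have h0 : (0:ℝ) • wx + (0:ℝ) • wy + r • (wx * wy) = 0 := by
    simp only [zero_smul, zero_add, h]
  exact (indep h0).2.2

lemma hom_ext {f g : WA →ₐ[ℝ] WA} (h1 : f wx = g wx) (h2 : f wy = g wy) : f = g := by
  apply Ideal.Quotient.algHom_ext
  apply MvPolynomial.algHom_ext
  intro i
  fin_cases i <;> simpa [Ideal.Quotient.mkₐ_eq_mk, wx, wy] using (by assumption : _)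

noncomputable def mkHom (a1 b1 c1 a2 b2 c2 : ℝ) (h1 : a1 * b1 = 0) (h2 : a2 * b2 = 0) :
    WA →ₐ[ℝ] WA :=
  Ideal.Quotient.liftₐ _
    (MvPolynomial.aeval ![a1 • wx + b1 • wy + c1 • (wx * wy),
                          a2 • wx + b2 • wy + c2 • (wx * wy)]) (by
    intro p hp
    have key : ∀ (u v w : ℝ), u * v = 0 →
        (u • wx + v • wy + w • (wx * wy)) * (u • wx + v • wy + w • (wx * wy)) = 0 := by
      intro u v w huv
      rw [mul_expand]
      have : u * v + v * u = 0 := by rw [mul_comm v u]; linarith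
      rw [this, zero_smul]
    have hle : Ideal.span {(MvPolynomial.X 0 : MvPolynomial (Fin 2) ℝ) ^ 2,
        (MvPolynomial.X 1) ^ 2} ≤ RingHom.ker (MvPolynomial.aeval
          ![a1 • wx + b1 • wy + c1 • (wx * wy),
            a2 • wx + b2 • wy + c2 • (wx * wy)] :
          MvPolynomial (Fin 2) ℝ →ₐ[ℝ] WA).toRingHom := by
      rw [Ideal.span_le]
      rintro q (rfl | rfl) <;>
        simp only [SetLike.mem_coe, RingHom.mem_ker, AlgHom.toRingHom_eq_coe,
          RingHom.coe_coe, sq, map_mul, MvPolynomial.aeval_X,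
          Matrix.cons_val_zero, Matrix.cons_val_one, Matrix.head_cons]
      · exact key _ _ _ h1
      · exact key _ _ _ h2
    exact hle hp)

lemma mkHom_wx (a1 b1 c1 a2 b2 c2 : ℝ) (h1 : a1 * b1 = 0) (h2 : a2 * b2 = 0) :
    mkHom a1 b1 c1 a2 b2 c2 h1 h2 wx = a1 • wx + b1 • wy + c1 • (wx * wy) := by
  show (MvPolynomial.aeval ![a1 • wx + b1 • wy + c1 • (wx * wy),
      a2 • wx + b2 • wy + c2 • (wx * wy)] : MvPolynomial (Fin 2) ℝ →ₐ[ℝ] WA)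
      (MvPolynomial.X 0) = _
  simp

lemma mkHom_wy (a1 b1 c1 a2 b2 c2 : ℝ) (h1 : a1 * b1 = 0) (h2 : a2 * b2 = 0) :
    mkHom a1 b1 c1 a2 b2 c2 h1 h2 wy = a2 • wx + b2 • wy + c2 • (wx * wy) := by
  show (MvPolynomial.aeval ![a1 • wx + b1 • wy + c1 • (wx * wy),
      a2 • wx + b2 • wy + c2 • (wx * wy)] : MvPolynomial (Fin 2) ℝ →ₐ[ℝ] WA)
      (MvPolynomial.X 1) = _
  simp

lemma mkHom_xy (a1 b1 c1 a2 b2 c2 : ℝ) (h1 : a1 * b1 = 0) (h2 : a2 * b2 = 0) :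
    mkHom a1 b1 c1 a2 b2 c2 h1 h2 (wx * wy) = (a1 * b2 + b1 * a2) • (wx * wy) := by
  rw [map_mul, mkHom_wx, mkHom_wy, mul_expand]

lemma mkHom_comb (a1 b1 c1 a2 b2 c2 : ℝ) (h1 : a1 * b1 = 0) (h2 : a2 * b2 = 0)
    (x y z : ℝ) :
    mkHom a1 b1 c1 a2 b2 c2 h1 h2 (x • wx + y • wy + z • (wx * wy)) =
      (x * a1 + y * a2) • wx + (x * b1 + y * b2) • wy +
        (x * c1 + y * c2 + z * (a1 * b2 + b1 * a2)) • (wx * wy) := by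
  rw [map_add, map_add, map_smul, map_smul, map_smul, mkHom_wx, mkHom_wy, mkHom_xy]
  simp only [smul_add, smul_smul]
  module

lemma comb_eq_wx {x y z : ℝ} (hx : x = 1) (hy : y = 0) (hz : z = 0) :
    x • wx + y • wy + z • (wx * wy) = wx := by
  subst hx hy hz; simp

lemma comb_eq_wy {x y z : ℝ} (hx : x = 0) (hy : y = 1) (hz : z = 0) :
    x • wx + y • wy + z • (wx * wy) = wy := by
  subst hx hy hz; simp

noncomputable def equiv1 (a c e f : ℝ) (ha : a ≠ 0) (he : e ≠ 0) : WA ≃ₐ[ℝ] WA :=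
  AlgEquiv.ofAlgHom
    (mkHom a 0 c 0 e f (by ring) (by ring))
    (mkHom a⁻¹ 0 (-c/(a^2*e)) 0 e⁻¹ (-f/(a*e^2)) (by ring) (by ring))
    (by
      apply hom_ext <;>
        simp only [AlgHom.comp_apply, mkHom_wx, mkHom_wy, mkHom_comb, AlgHom.id_apply]
      · exact comb_eq_wx (by field_simp; norm_num) (by ring) (by field_simp; ring)
      · exact comb_eq_wy (by ring) (by field_simp; norm_num) (by field_simp; ring))
    (by
      apply hom_ext <;>
        simp only [AlgHom.comp_apply, mkHom_wx, mkHom_wy, mkHom_comb, AlgHom.id_apply]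
      · exact comb_eq_wx (by field_simp; norm_num) (by ring) (by field_simp; ring)
      · exact comb_eq_wy (by ring) (by field_simp; norm_num) (by field_simp; ring))

noncomputable def equiv2 (b c d f : ℝ) (hb : b ≠ 0) (hd : d ≠ 0) : WA ≃ₐ[ℝ] WA :=
  AlgEquiv.ofAlgHom
    (mkHom 0 b c d 0 f (by ring) (by ring))
    (mkHom 0 d⁻¹ (-f/(b*d^2)) b⁻¹ 0 (-c/(b^2*d)) (by ring) (by ring))
    (by
      apply hom_ext <;>
        simp only [AlgHom.comp_apply, mkHom_wx, mkHom_wy, mkHom_comb, AlgHom.id_apply]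
      · exact comb_eq_wx (by field_simp; norm_num) (by ring) (by field_simp; ring)
      · exact comb_eq_wy (by ring) (by field_simp; norm_num) (by field_simp; ring))
    (by
      apply hom_ext <;>
        simp only [AlgHom.comp_apply, mkHom_wx, mkHom_wy, mkHom_comb, AlgHom.id_apply]
      · exact comb_eq_wx (by field_simp; norm_num) (by ring) (by field_simp; ring)
      · exact comb_eq_wy (by ring) (by field_simp; norm_num) (by field_simp; ring))

lemma equiv1_apply (a c e f : ℝ) (ha : a ≠ 0) (he : e ≠ 0) (z : WA) :
    equiv1 a c e f ha he z = mkHom a 0 c 0 e f (by ring) (by ring) z := rfl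

lemma equiv2_apply (b c d f : ℝ) (hb : b ≠ 0) (hd : d ≠ 0) (z : WA) :
    equiv2 b c d f hb hd z = mkHom 0 b c d 0 f (by ring) (by ring) z := rfl

def SS : Set (Matrix (Fin 3) (Fin 3) ℝ) :=
  {M | M 0 0 * M 0 1 = 0 ∧ M 1 0 * M 1 1 = 0 ∧ M 2 0 = 0 ∧ M 2 1 = 0 ∧
    M 2 2 = M 0 0 * M 1 1 + M 0 1 * M 1 0 ∧ M 2 2 ≠ 0}

theorem autMatrices_eq : autMatrices = SS := by
  ext M
  constructor
  · rintro ⟨φ, h1, h2, h3⟩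
    have e1 : φ wx * φ wx = 0 := by rw [← map_mul, wx_sq, map_zero]
    rw [h1, mul_expand] at e1
    have h00 : M 0 0 * M 0 1 = 0 := by
      have := smul_xy_eq_zero e1; nlinarith [this]
    have e2 : φ wy * φ wy = 0 := by rw [← map_mul, wy_sq, map_zero]
    rw [h2, mul_expand] at e2
    have h10 : M 1 0 * M 1 1 = 0 := by
      have := smul_xy_eq_zero e2; nlinarith [this]
    have eprod : φ (wx * wy) = (M 0 0 * M 1 1 + M 0 1 * M 1 0) • (wx * wy) := by
      rw [map_mul, h1, h2, mul_expand]
    set D := M 0 0 * M 1 1 + M 0 1 * M 1 0 with hD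
    have h4 : M 2 0 • wx + M 2 1 • wy + (M 2 2 - D) • (wx * wy) = 0 := by
      have h5 : M 2 0 • wx + M 2 1 • wy + M 2 2 • (wx * wy) = D • (wx * wy) :=
        h3.symm.trans eprod
      calc M 2 0 • wx + M 2 1 • wy + (M 2 2 - D) • (wx * wy)
          = (M 2 0 • wx + M 2 1 • wy + M 2 2 • (wx * wy)) - D • (wx * wy) := by
            rw [sub_smul]; abel
        _ = 0 := by rw [h5, sub_self]
    obtain ⟨h20, h21, h22⟩ := indep h4
    have h22' : M 2 2 = D := by linarith
    have hDne : D ≠ 0 := by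
      intro hD0
      apply wxy_ne
      apply φ.injective
      rw [eprod, hD0, zero_smul, map_zero]
    exact ⟨h00, h10, h20, h21, h22', h22' ▸ hDne⟩
  · rintro ⟨h00, h10, h20, h21, h22, hne⟩
    by_cases hM00 : M 0 0 = 0
    · -- swap type
      have hM22 : M 2 2 = M 0 1 * M 1 0 := by rw [h22, hM00]; ring
      have hb : M 0 1 ≠ 0 := fun h => hne (by rw [hM22, h]; ring)
      have hd : M 1 0 ≠ 0 := fun h => hne (by rw [hM22, h]; ring)
      have hM11 : M 1 1 = 0 := by
        rcases mul_eq_zero.1 h10 with h | h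
        · exact absurd h hd
        · exact h
      refine ⟨equiv2 (M 0 1) (M 0 2) (M 1 0) (M 1 2) hb hd, ?_, ?_, ?_⟩
      · rw [equiv2_apply, mkHom_wx, hM00]
      · rw [equiv2_apply, mkHom_wy, hM11]
      · rw [equiv2_apply, mkHom_xy, h20, h21, hM22]
        simp
    · -- diagonal type
      have hM01 : M 0 1 = 0 := by
        rcases mul_eq_zero.1 h00 with h | h
        · exact absurd h hM00
        · exact h
      have hM22 : M 2 2 = M 0 0 * M 1 1 := by rw [h22, hM01]; ring
      have he : M 1 1 ≠ 0 := fun h => hne (by rw [hM22, h]; ring)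
      have hM10 : M 1 0 = 0 := by
        rcases mul_eq_zero.1 h10 with h | h
        · exact h
        · exact absurd h he
      refine ⟨equiv1 (M 0 0) (M 0 2) (M 1 1) (M 1 2) hM00 he, ?_, ?_, ?_⟩
      · rw [equiv1_apply, mkHom_wx, hM01]
      · rw [equiv1_apply, mkHom_wy, hM10]
      · rw [equiv1_apply, mkHom_xy, h20, h21, hM22]
        simp

open Set

lemma SS_alt {M : Matrix (Fin 3) (Fin 3) ℝ} (h : M ∈ SS) :
    (M 0 0 ≠ 0 ∧ M 0 1 = 0 ∧ M 1 0 = 0 ∧ M 1 1 ≠ 0 ∧ M 2 2 = M 0 0 * M 1 1) ∨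
    (M 0 0 = 0 ∧ M 0 1 ≠ 0 ∧ M 1 0 ≠ 0 ∧ M 1 1 = 0 ∧ M 2 2 = M 0 1 * M 1 0) := by
  obtain ⟨h00, h10, h20, h21, h22, hne⟩ := h
  by_cases hM00 : M 0 0 = 0
  · right
    have hM22 : M 2 2 = M 0 1 * M 1 0 := by rw [h22, hM00]; ring
    have hb : M 0 1 ≠ 0 := fun h => hne (by rw [hM22, h]; ring)
    have hd : M 1 0 ≠ 0 := fun h => hne (by rw [hM22, h]; ring)
    have hM11 : M 1 1 = 0 := by
      rcases mul_eq_zero.1 h10 with h | h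
      · exact absurd h hd
      · exact h
    exact ⟨hM00, hb, hd, hM11, hM22⟩
  · left
    have hM01 : M 0 1 = 0 := by
      rcases mul_eq_zero.1 h00 with h | h
      · exact absurd h hM00
      · exact h
    have hM22 : M 2 2 = M 0 0 * M 1 1 := by rw [h22, hM01]; ring
    have he : M 1 1 ≠ 0 := fun h => hne (by rw [hM22, h]; ring)
    have hM10 : M 1 0 = 0 := by
      rcases mul_eq_zero.1 h10 with h | h
      · exact h
      · exact absurd h he
    exact ⟨hM00, hM01, hM10, he, hM22⟩

def sOf (b : Bool) : ℝ := if b then -1 else 1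

lemma sOf_ne (b : Bool) : sOf b ≠ 0 := by cases b <;> norm_num [sOf]

lemma sOf_mul_self (b : Bool) : sOf b * sOf b = 1 := by cases b <;> norm_num [sOf]

lemma sOf_decide_pos {a : ℝ} (ha : a ≠ 0) : 0 < sOf (decide (a < 0)) * a := by
  by_cases h : a < 0
  · rw [decide_eq_true h]; simp [sOf]; nlinarith
  · have h' : 0 < a := lt_of_le_of_ne (not_lt.1 h) (Ne.symm ha)
    rw [decide_eq_false h]; simp [sOf]; nlinarith

def Hm (sw : Bool) (s1 s2 : ℝ) (p : ℝ × ℝ × ℝ × ℝ) : Matrix (Fin 3) (Fin 3) ℝ :=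
  if sw then
    ![![0, s1 * p.1, p.2.2.1], ![s2 * p.2.1, 0, p.2.2.2], ![0, 0, s1 * p.1 * (s2 * p.2.1)]]
  else
    ![![s1 * p.1, 0, p.2.2.1], ![0, s2 * p.2.1, p.2.2.2], ![0, 0, s1 * p.1 * (s2 * p.2.1)]]

def PP : Set (ℝ × ℝ × ℝ × ℝ) := Ioi 0 ×ˢ (Ioi 0 ×ˢ (univ : Set (ℝ × ℝ)))

lemma PP_pathConnected : IsPathConnected PP := by
  apply Convex.isPathConnected
  · exact (convex_Ioi 0).prod ((convex_Ioi 0).prod convex_univ)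
  · exact ⟨(1, 1, 0, 0), by simp [PP]⟩

lemma Hm_continuous (sw : Bool) (s1 s2 : ℝ) : Continuous (Hm sw s1 s2) := by
  cases sw <;>
  · apply continuous_pi; intro i; apply continuous_pi; intro j
    fin_cases i <;> fin_cases j <;> simp [Hm] <;> fun_prop

lemma Hm_mem_SS (sw b1 b2 : Bool) : Hm sw (sOf b1) (sOf b2) '' PP ⊆ SS := by
  rintro _ ⟨p, hp, rfl⟩
  obtain ⟨hp1, hp2, -⟩ := hp
  have h1 : sOf b1 * p.1 ≠ 0 := mul_ne_zero (sOf_ne b1) (ne_of_gt hp1)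
  have h2 : sOf b2 * p.2.1 ≠ 0 := mul_ne_zero (sOf_ne b2) (ne_of_gt hp2)
  cases sw <;>
    refine ⟨?_, ?_, ?_, ?_, ?_, ?_⟩ <;>
    simp [Hm, SS, mul_ne_zero h1 h2, Matrix.vecHead, Matrix.vecTail] <;> ring

noncomputable def gmap (m : ↥SS) : Bool × Bool × Bool :=
  (decide (m.val 0 0 = 0), decide (m.val 0 0 + m.val 0 1 < 0),
    decide (m.val 1 0 + m.val 1 1 < 0))

lemma mem_fiber (m : ↥SS) :
    m.val ∈ Hm (gmap m).1 (sOf (gmap m).2.1) (sOf (gmap m).2.2) '' PP := by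
  obtain hd | hs := SS_alt m.2
  · obtain ⟨h00, h01, h10, h11, h22⟩ := hd
    have e1 : m.val 0 0 + m.val 0 1 = m.val 0 0 := by rw [h01, add_zero]
    have e2 : m.val 1 0 + m.val 1 1 = m.val 1 1 := by rw [h10, zero_add]
    have hg1 : (gmap m).1 = false := by simp [gmap, h00]
    set b1 := (gmap m).2.1 with hb1
    set b2 := (gmap m).2.2 with hb2
    have hs1 : 0 < sOf b1 * m.val 0 0 := by
      rw [hb1]; simp only [gmap, e1]; exact sOf_decide_pos h00
    have hs2 : 0 < sOf b2 * m.val 1 1 := by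
      rw [hb2]; simp only [gmap, e2]; exact sOf_decide_pos h11
    rw [hg1]
    refine ⟨(sOf b1 * m.val 0 0, sOf b2 * m.val 1 1, m.val 0 2, m.val 1 2),
      ⟨hs1, hs2, trivial⟩, ?_⟩
    have k1 : sOf b1 * (sOf b1 * m.val 0 0) = m.val 0 0 := by
      rw [← mul_assoc, sOf_mul_self, one_mul]
    have k2 : sOf b2 * (sOf b2 * m.val 1 1) = m.val 1 1 := by
      rw [← mul_assoc, sOf_mul_self, one_mul]
    ext i j
    fin_cases i <;> fin_cases j <;> simp [Hm, Matrix.vecHead, Matrix.vecTail] <;>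
      first
      | rw [k1, k2, h22]
      | rw [k1]
      | rw [k2]
      | exact h01.symm
      | exact h10.symm
      | exact (m.2.2.2.1).symm
      | exact (m.2.2.2.2.1).symm
  · obtain ⟨h00, h01, h10, h11, h22⟩ := hs
    have e1 : m.val 0 0 + m.val 0 1 = m.val 0 1 := by rw [h00, zero_add]
    have e2 : m.val 1 0 + m.val 1 1 = m.val 1 0 := by rw [h11, add_zero]
    have hg1 : (gmap m).1 = true := by simp [gmap, h00]
    set b1 := (gmap m).2.1 with hb1
    set b2 := (gmap m).2.2 with hb2
    have hs1 : 0 < sOf b1 * m.val 0 1 := by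
      rw [hb1]; simp only [gmap, e1]; exact sOf_decide_pos h01
    have hs2 : 0 < sOf b2 * m.val 1 0 := by
      rw [hb2]; simp only [gmap, e2]; exact sOf_decide_pos h10
    rw [hg1]
    refine ⟨(sOf b1 * m.val 0 1, sOf b2 * m.val 1 0, m.val 0 2, m.val 1 2),
      ⟨hs1, hs2, trivial⟩, ?_⟩
    have k1 : sOf b1 * (sOf b1 * m.val 0 1) = m.val 0 1 := by
      rw [← mul_assoc, sOf_mul_self, one_mul]
    have k2 : sOf b2 * (sOf b2 * m.val 1 0) = m.val 1 0 := by
      rw [← mul_assoc, sOf_mul_self, one_mul]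
    ext i j
    fin_cases i <;> fin_cases j <;> simp [Hm, Matrix.vecHead, Matrix.vecTail] <;>
      first
      | rw [k1, k2, h22]
      | rw [k1]
      | rw [k2]
      | exact h00.symm
      | exact h11.symm
      | exact (m.2.2.2.1).symm
      | exact (m.2.2.2.2.1).symm

lemma sign_iff {a b : ℝ} (h : 0 < a * b) : a < 0 ↔ b < 0 := by
  constructor <;> intro h' <;> nlinarith

lemma gmap_locallyConstant : IsLocallyConstant gmap := by
  rw [IsLocallyConstant.iff_exists_open]
  intro m
  have hsum1 : m.val 0 0 + m.val 0 1 ≠ 0 := by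
    obtain hd | hs := SS_alt m.2
    · rw [hd.2.1, add_zero]; exact hd.1
    · rw [hs.1, zero_add]; exact hs.2.1
  have hsum2 : m.val 1 0 + m.val 1 1 ≠ 0 := by
    obtain hd | hs := SS_alt m.2
    · rw [hd.2.2.1, zero_add]; exact hd.2.2.2.1
    · rw [hs.2.2.2.1, add_zero]; exact hs.2.2.1
  have hcont1 : Continuous fun A : Matrix (Fin 3) (Fin 3) ℝ => A 0 0 :=
    (continuous_apply (0 : Fin 3)).comp (continuous_apply (0 : Fin 3))
  have hcont01 : Continuous fun A : Matrix (Fin 3) (Fin 3) ℝ => A 0 1 :=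
    (continuous_apply (1 : Fin 3)).comp (continuous_apply (0 : Fin 3))
  have hcont10 : Continuous fun A : Matrix (Fin 3) (Fin 3) ℝ => A 1 0 :=
    (continuous_apply (0 : Fin 3)).comp (continuous_apply (1 : Fin 3))
  have hcont11 : Continuous fun A : Matrix (Fin 3) (Fin 3) ℝ => A 1 1 :=
    (continuous_apply (1 : Fin 3)).comp (continuous_apply (1 : Fin 3))
  by_cases hm00 : m.val 0 0 = 0
  · -- swap type : use openness of {A | A 0 1 ≠ 0}
    have hm01 : m.val 0 1 ≠ 0 := by
      obtain hd | hs := SS_alt m.2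
      · exact absurd hm00 hd.1
      · exact hs.2.1
    refine ⟨Subtype.val ⁻¹' ({A | A 0 1 ≠ 0} ∩
        {A | 0 < (A 0 0 + A 0 1) * (m.val 0 0 + m.val 0 1)} ∩
        {A | 0 < (A 1 0 + A 1 1) * (m.val 1 0 + m.val 1 1)}), ?_, ?_, ?_⟩
    · apply IsOpen.preimage continuous_subtype_val
      refine (IsOpen.inter (IsOpen.inter ?_ ?_) ?_)
      · exact isOpen_compl_iff.2 (isClosed_singleton.preimage hcont01)
      · exact isOpen_Ioi.preimage ((hcont1.add hcont01).mul continuous_const)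
      · exact isOpen_Ioi.preimage ((hcont10.add hcont11).mul continuous_const)
    · exact ⟨⟨hm01, mul_self_pos.2 hsum1⟩, mul_self_pos.2 hsum2⟩
    · rintro n ⟨⟨hn01, hn1⟩, hn2⟩
      have hn00 : n.val 0 0 = 0 := by
        rcases mul_eq_zero.1 n.2.1 with h | h
        · exact h
        · exact absurd h hn01
      simp only [gmap, Prod.mk.injEq]
      refine ⟨by rw [decide_eq_true hn00, decide_eq_true hm00], ?_, ?_⟩
      · exact decide_eq_decide.2 (sign_iff hn1)
      · exact decide_eq_decide.2 (sign_iff hn2)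
  · refine ⟨Subtype.val ⁻¹' ({A | A 0 0 ≠ 0} ∩
        {A | 0 < (A 0 0 + A 0 1) * (m.val 0 0 + m.val 0 1)} ∩
        {A | 0 < (A 1 0 + A 1 1) * (m.val 1 0 + m.val 1 1)}), ?_, ?_, ?_⟩
    · apply IsOpen.preimage continuous_subtype_val
      refine (IsOpen.inter (IsOpen.inter ?_ ?_) ?_)
      · exact isOpen_compl_iff.2 (isClosed_singleton.preimage hcont1)
      · exact isOpen_Ioi.preimage ((hcont1.add hcont01).mul continuous_const)
      · exact isOpen_Ioi.preimage ((hcont10.add hcont11).mul continuous_const)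
    · exact ⟨⟨hm00, mul_self_pos.2 hsum1⟩, mul_self_pos.2 hsum2⟩
    · rintro n ⟨⟨hn00, hn1⟩, hn2⟩
      simp only [gmap, Prod.mk.injEq]
      refine ⟨by rw [decide_eq_false hn00, decide_eq_false hm00], ?_, ?_⟩
      · exact decide_eq_decide.2 (sign_iff hn1)
      · exact decide_eq_decide.2 (sign_iff hn2)

lemma comp_eq {m n : ↥SS} (h : gmap m = gmap n) :
    (m : ConnectedComponents ↥SS) = n := by
  rw [ConnectedComponents.coe_eq_coe']
  set sw := (gmap n).1
  set b1 := (gmap n).2.1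
  set b2 := (gmap n).2.2
  have hsub : Hm sw (sOf b1) (sOf b2) '' PP ⊆ SS := Hm_mem_SS sw b1 b2
  have hm : m.val ∈ Hm sw (sOf b1) (sOf b2) '' PP := by
    have := mem_fiber m
    rwa [h] at this
  have hn : n.val ∈ Hm sw (sOf b1) (sOf b2) '' PP := mem_fiber n
  haveI : PreconnectedSpace ↥(Hm sw (sOf b1) (sOf b2) '' PP) :=
    Subtype.preconnectedSpace
      ((PP_pathConnected.image (Hm_continuous sw (sOf b1) (sOf b2))).isConnected.isPreconnected)
  have hpc : IsPreconnected (Set.range (Set.inclusion hsub)) :=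
    isPreconnected_range (continuous_inclusion hsub)
  have hmm : m ∈ Set.range (Set.inclusion hsub) := ⟨⟨m.val, hm⟩, Subtype.ext rfl⟩
  have hnn : n ∈ Set.range (Set.inclusion hsub) := ⟨⟨n.val, hn⟩, Subtype.ext rfl⟩
  exact hpc.subset_connectedComponent hnn hmm


lemma decide_sOf (b : Bool) : decide (sOf b < 0) = b := by cases b <;> norm_num [sOf]

lemma gmap_surj : Function.Surjective gmap := by
  rintro ⟨b1, b2, b3⟩
  have hPPmem : ((1:ℝ),(1:ℝ),(0:ℝ),(0:ℝ)) ∈ PP := ⟨by norm_num, by norm_num, trivial⟩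
  refine ⟨⟨Hm b1 (sOf b2) (sOf b3) (1,1,0,0), Hm_mem_SS b1 b2 b3 ⟨_, hPPmem, rfl⟩⟩, ?_⟩
  cases b1 <;>
    simp only [gmap, Hm, Bool.false_eq_true, ↓reduceIte, if_false, if_true, Matrix.cons_val_zero,
      Matrix.cons_val_one, Matrix.head_cons, mul_one, add_zero, zero_add,
      Prod.mk.injEq] <;>
    refine ⟨?_, decide_sOf b2, decide_sOf b3⟩
  · exact decide_eq_false (sOf_ne b2)
  · simp

theorem SS_card : Nat.card (ConnectedComponents ↥SS) = 8 := by
  have hcont : Continuous gmap := gmap_locallyConstant.continuous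
  have hinj : Function.Injective hcont.connectedComponentsLift := by
    intro x y hxy
    obtain ⟨m, rfl⟩ := ConnectedComponents.surjective_coe x
    obtain ⟨n, rfl⟩ := ConnectedComponents.surjective_coe y
    rw [Continuous.connectedComponentsLift_apply_coe,
      Continuous.connectedComponentsLift_apply_coe] at hxy
    exact comp_eq hxy
  have hsurj : Function.Surjective hcont.connectedComponentsLift := by
    intro b
    obtain ⟨m, rfl⟩ := gmap_surj b
    exact ⟨m, hcont.connectedComponentsLift_apply_coe m⟩
  have h8 : Nat.card (ConnectedComponents ↥SS) = Nat.card (Bool × Bool × Bool) :=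
    Nat.card_congr (Equiv.ofBijective _ ⟨hinj, hsurj⟩)
  rw [h8]
  simp [Nat.card_eq_fintype_card]

/-- The group of ℝ-algebra automorphisms of `A = ℝ[X,Y]/⟨X²,Y²⟩`, topologized via its
embedding into the `3 × 3` real matrices through its action on `𝔫`, has exactly eight
connected components. -/
theorem stmt4 : Nat.card (ConnectedComponents ↥autMatrices) = 8 := by
  rw [autMatrices_eq]; exact SS_card
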